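/- For the prototype function h(x,z) = 1/(z−x) with z not a node, the barycentric rational interpolant of h(·,z) at nodes x_0,…,x_N with weights λ_i satisfies the exact error formula h(x,z) − r[h](x) = (1/(z−x)) · (Σ_i λ_i/(z−x_i)) / (Σ_i λ_i/(x−x_i)) for all x not equal to any node and not equal to z. -/

import Mathlib

/-- Exact error formula for the barycentric interpolant of h(x,z) = 1/(z-x). -/
theorem prototype_error_formula (N : ℕ) (x : Fin (N+1) → ℝ) (hx : Function.Injective x)
    (l : Fin (N+1) → ℝ) (hl : ∀ i, l i ≠ 0) (z : ℂ) (t : ℝ)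
    (hz : ∀ i, z ≠ (x i : ℂ)) (ht : ∀ i, t ≠ x i) (htz : (t : ℂ) ≠ z)
    (hden : (∑ i, (l i : ℂ) / ((t : ℂ) - (x i : ℂ))) ≠ 0) :
    1 / (z - (t : ℂ)) -
        (∑ i, (l i : ℂ) * (1 / (z - (x i : ℂ))) / ((t : ℂ) - (x i : ℂ))) /
          (∑ i, (l i : ℂ) / ((t : ℂ) - (x i : ℂ))) =
      (1 / (z - (t : ℂ))) *
        ((∑ i, (l i : ℂ) / (z - (x i : ℂ))) / (∑ i, (l i : ℂ) / ((t : ℂ) - (x i : ℂ)))) := by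
  have hzx : ∀ i, z - (x i : ℂ) ≠ 0 := fun i => sub_ne_zero.mpr (hz i)
  have htx : ∀ i, (t : ℂ) - (x i : ℂ) ≠ 0 := fun i =>
    sub_ne_zero.mpr (by exact_mod_cast ht i)
  have hzt : z - (t : ℂ) ≠ 0 := sub_ne_zero.mpr (Ne.symm htz)
  have key : (∑ i, (l i : ℂ) * (1 / (z - (x i : ℂ))) / ((t : ℂ) - (x i : ℂ)))
      = (1 / (z - (t : ℂ))) *
        ((∑ i, (l i : ℂ) / ((t : ℂ) - (x i : ℂ))) - ∑ i, (l i : ℂ) / (z - (x i : ℂ))) := by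
    rw [← Finset.sum_sub_distrib, Finset.mul_sum]
    refine Finset.sum_congr rfl fun i _ => ?_
    rw [div_sub_div _ _ (htx i) (hzx i), mul_one_div, div_div, one_div, inv_mul_eq_div,
      div_div, div_eq_div_iff (mul_ne_zero (hzx i) (htx i))
        (mul_ne_zero (mul_ne_zero (htx i) (hzx i)) hzt)]
    ring
  rw [key]
  field_simp
  ring
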